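/- In the ring of formal power series in t over Q(q), the following identity holds: (1 - q^{-1} t)/(1 - t) = \sum_{k=0}^{\infty} t^k \prod_{j=1}^{k} (1 - q^{-1} t^{j-1})/(1 - q^{-1} t^{j+1}). -/

import Mathlib

open PowerSeries

section Main

variable {K : Type*} [Field K] (A x : K)

lemma prod_tel : ∀ k : ℕ,
    (∏ j ∈ Finset.Icc 1 k, (1 - A * x ^ (j - 1))) * ((1 - A * x ^ k) * (1 - A * x ^ (k + 1)))
      = (1 - A) * (1 - A * x) * ∏ j ∈ Finset.Icc 1 k, (1 - A * x ^ (j + 1)) := by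
  intro k
  induction k with
  | zero => simp [mul_comm]
  | succ k ih =>
    rw [Finset.prod_Icc_succ_top (by omega), Finset.prod_Icc_succ_top (by omega : 1 ≤ k + 1)]
    simp only [Nat.add_sub_cancel]
    linear_combination (1 - A * x ^ (k + 2)) * ih

lemma term_closed (hA : ∀ m : ℕ, (1 - A * x ^ m) ≠ 0) (k : ℕ) :
    x ^ k * (∏ j ∈ Finset.Icc 1 k, (1 - A * x ^ (j - 1)))
      / (∏ j ∈ Finset.Icc 1 k, (1 - A * x ^ (j + 1)))
    = (1 - A) * (1 - A * x) * x ^ k / ((1 - A * x ^ k) * (1 - A * x ^ (k + 1))) := by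
  have hd : (∏ j ∈ Finset.Icc 1 k, (1 - A * x ^ (j + 1))) ≠ 0 :=
    Finset.prod_ne_zero_iff.2 fun j _ => hA (j + 1)
  rw [div_eq_div_iff hd (mul_ne_zero (hA k) (hA (k + 1)))]
  linear_combination x ^ k * prod_tel A x k

lemma step_frac (b : K) (hx : (1 - x : K) ≠ 0) (_hax : (1 - A * x) ≠ 0)
    (hb : (1 - A * b) ≠ 0) (hbx : (1 - A * (b * x)) ≠ 0) :
    b * ((1 - A) * (1 - A * x) / ((1 - x) * (1 - A * b)))
      = (1 - A) * (1 - A * x) * b / ((1 - A * b) * (1 - A * (b * x)))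
        + b * x * ((1 - A) * (1 - A * x) / ((1 - x) * (1 - A * (b * x)))) := by
  rw [mul_div_assoc', mul_div_assoc', div_add_div _ _ (mul_ne_zero hb hbx) (mul_ne_zero hx hbx),
    div_eq_div_iff (mul_ne_zero hx hb) (mul_ne_zero (mul_ne_zero hb hbx) (mul_ne_zero hx hbx))]
  ring

lemma main_field (hA : ∀ m : ℕ, (1 - A * x ^ m) ≠ 0) (hx : (1 - x : K) ≠ 0) : ∀ N : ℕ,
    (1 - A * x) / (1 - x) =
      (∑ k ∈ Finset.range (N + 1),
        x ^ k * (∏ j ∈ Finset.Icc 1 k, (1 - A * x ^ (j - 1)))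
          / (∏ j ∈ Finset.Icc 1 k, (1 - A * x ^ (j + 1))))
      + x ^ (N + 1) * ((1 - A) * (1 - A * x) / ((1 - x) * (1 - A * x ^ (N + 1)))) := by
  have hax : (1 - A * x) ≠ 0 := by simpa using hA 1
  intro N
  induction N with
  | zero =>
    have he : Finset.Icc 1 0 = (∅ : Finset ℕ) := Finset.Icc_eq_empty (by omega)
    simp only [zero_add, Finset.range_one, Finset.sum_singleton, he, Finset.prod_empty, pow_zero,
      pow_one, one_mul, mul_one, div_one]
    field_simp
    ring
  | succ N ih =>
    rw [Finset.sum_range_succ, term_closed A x hA (N + 1), ih]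
    have key := step_frac A x (x ^ (N + 1)) hx hax
      (by simpa using hA (N + 1)) (by rw [← pow_succ]; simpa using hA (N + 2))
    rw [← pow_succ] at key
    linear_combination key
end Main

section Transfer

variable {F : Type*} [Field F]

lemma map_inv_of_constCoeff (ψ : PowerSeries F) (h : constantCoeff (R := F) ψ ≠ 0) :
    HahnSeries.ofPowerSeries ℤ F ψ⁻¹ = (HahnSeries.ofPowerSeries ℤ F ψ)⁻¹ := by
  have h1 : HahnSeries.ofPowerSeries ℤ F ψ * HahnSeries.ofPowerSeries ℤ F ψ⁻¹ = 1 := by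
    rw [← map_mul, PowerSeries.mul_inv_cancel ψ h, map_one]
  exact eq_inv_of_mul_eq_one_left (by rw [mul_comm] at h1; exact h1)

lemma constCoeff_fact (a : F) (ha : a ≠ 1) :
    ∀ m : ℕ, constantCoeff (R := F) (1 - PowerSeries.C (R := F) a * X ^ m) ≠ 0 := by
  rintro (_ | m) <;> simp [sub_ne_zero, Ne.symm ha]

lemma ps_identity (a : F) (ha : a ≠ 1) (N : ℕ) :
    (1 - PowerSeries.C (R := F) a * X) * (1 - X)⁻¹ =
      (∑ k ∈ Finset.range (N + 1),
        X ^ k * (∏ j ∈ Finset.Icc 1 k, (1 - PowerSeries.C (R := F) a * X ^ (j - 1))) *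
          (∏ j ∈ Finset.Icc 1 k, (1 - PowerSeries.C (R := F) a * X ^ (j + 1)))⁻¹)
      + X ^ (N + 1) * ((1 - PowerSeries.C (R := F) a) * (1 - PowerSeries.C (R := F) a * X) *
          ((1 - X) * (1 - PowerSeries.C (R := F) a * X ^ (N + 1)))⁻¹) := by
  have hinj := HahnSeries.ofPowerSeries_injective (Γ := ℤ) (R := F)
  apply hinj
  set φ' := HahnSeries.ofPowerSeries ℤ F with hφ'
  let A : LaurentSeries F := φ' (PowerSeries.C (R := F) a)
  let x : LaurentSeries F := φ' (X : PowerSeries F)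
  have hc := constCoeff_fact a ha
  have hone : constantCoeff (R := F) (1 - X : PowerSeries F) ≠ 0 := by simp
  have hnz : ∀ ψ : PowerSeries F, constantCoeff (R := F) ψ ≠ 0 → ψ ≠ 0 := by
    intro ψ h h0; exact h (by rw [h0]; simp)
  have hmap : ∀ m : ℕ, φ' (1 - PowerSeries.C (R := F) a * X ^ m) = 1 - A * x ^ m := by
    intro m; simp only [map_sub, map_one, map_mul, map_pow]
    rfl
  have hne : ∀ m : ℕ, (1 - A * x ^ m) ≠ 0 := by
    intro m h0
    exact hnz _ (hc m) (hinj (by rw [hmap m, h0, map_zero]))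
  have hxne : (1 - x) ≠ 0 := by
    intro h0
    refine hnz _ hone (hinj ?_)
    rw [map_sub, map_one, map_zero]; exact h0
  have hcprod : ∀ k : ℕ,
      constantCoeff (R := F) (∏ j ∈ Finset.Icc 1 k, (1 - PowerSeries.C (R := F) a * X ^ (j + 1))) ≠ 0 := by
    intro k
    rw [map_prod]
    exact Finset.prod_ne_zero_iff.2 fun j _ => hc (j + 1)
  have hcden : constantCoeff (R := F) ((1 - X) * (1 - PowerSeries.C (R := F) a * X ^ (N + 1))) ≠ 0 := by
    rw [map_mul]; exact mul_ne_zero hone (hc (N + 1))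
  have key := main_field A x hne hxne N
  have e1 : φ' ((1 - PowerSeries.C (R := F) a * X) * (1 - X)⁻¹) = (1 - A * x) / (1 - x) := by
    rw [map_mul, map_inv_of_constCoeff _ hone, map_sub, map_one, map_sub, map_one, map_mul,
      div_eq_mul_inv]
  have e2 : ∀ k : ℕ, φ' (X ^ k * (∏ j ∈ Finset.Icc 1 k, (1 - PowerSeries.C (R := F) a * X ^ (j - 1))) *
      (∏ j ∈ Finset.Icc 1 k, (1 - PowerSeries.C (R := F) a * X ^ (j + 1)))⁻¹)
      = x ^ k * (∏ j ∈ Finset.Icc 1 k, (1 - A * x ^ (j - 1)))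
          / (∏ j ∈ Finset.Icc 1 k, (1 - A * x ^ (j + 1))) := by
    intro k
    rw [map_mul, map_mul, map_inv_of_constCoeff _ (hcprod k), map_pow, map_prod, map_prod,
      div_eq_mul_inv]
    simp only [hmap]
    exact congrArg (fun y => (x ^ k * ∏ j ∈ Finset.Icc 1 k, (1 - A * x ^ (j - 1))) * y⁻¹)
      (Finset.prod_congr rfl fun j _ => hmap (j + 1))
  have e3 : φ' (X ^ (N + 1) * ((1 - PowerSeries.C (R := F) a) * (1 - PowerSeries.C (R := F) a * X) *
      ((1 - X) * (1 - PowerSeries.C (R := F) a * X ^ (N + 1)))⁻¹))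
      = x ^ (N + 1) * ((1 - A) * (1 - A * x) / ((1 - x) * (1 - A * x ^ (N + 1)))) := by
    rw [map_mul, map_mul, map_inv_of_constCoeff _ hcden, div_eq_mul_inv]
    simp only [map_mul, map_sub, map_one, map_pow]
    rfl
  calc φ' ((1 - PowerSeries.C (R := F) a * X) * (1 - X)⁻¹) = (1 - A * x) / (1 - x) := e1
    _ = _ := key
    _ = _ := by
        rw [map_add, map_sum, e3, Finset.sum_congr rfl (fun k _ => (e2 k).symm)]

end Transfer

/-- In `ℚ(q)[[t]]`, `(1 - q⁻¹ t)/(1 - t) = ∑_{k≥0} t^k ∏_{j=1}^k (1 - q⁻¹ t^{j-1})/(1 - q⁻¹ t^{j+1})`,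
stated coefficient-wise (only the summands with `k ≤ N` contribute to the coefficient of `t^N`). -/
theorem product_series_identity :
    let F := RatFunc ℚ
    let q : F := RatFunc.X
    let t : PowerSeries F := PowerSeries.X
    ∀ N : ℕ,
      (PowerSeries.coeff (R := F) N) ((1 - PowerSeries.C (R := F) q⁻¹ * t) * (1 - t)⁻¹) =
        ∑ k ∈ Finset.range (N + 1),
          (PowerSeries.coeff (R := F) N)
            (t ^ k * (∏ j ∈ Finset.Icc 1 k, (1 - PowerSeries.C (R := F) q⁻¹ * t ^ (j - 1))) *
              (∏ j ∈ Finset.Icc 1 k, (1 - PowerSeries.C (R := F) q⁻¹ * t ^ (j + 1)))⁻¹) := by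
  intro F q t N
  have ha : (q⁻¹ : F) ≠ 1 := by
    rw [Ne, inv_eq_one]
    intro h
    have h2 : (algebraMap (Polynomial ℚ) (RatFunc ℚ)) Polynomial.X = algebraMap _ _ 1 := by
      simpa [RatFunc.algebraMap_X] using h
    have := RatFunc.algebraMap_injective ℚ h2
    simpa using congrArg (fun p => p.coeff 0) this
  rw [ps_identity (q⁻¹ : F) ha N, map_add, map_sum]
  have h0 : (PowerSeries.coeff (R := F) N) (X ^ (N + 1) * ((1 - PowerSeries.C (R := F) q⁻¹) *
      (1 - PowerSeries.C (R := F) q⁻¹ * X) *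
      ((1 - X) * (1 - PowerSeries.C (R := F) q⁻¹ * X ^ (N + 1)))⁻¹)) = 0 :=
    PowerSeries.X_pow_dvd_iff.mp ⟨_, rfl⟩ N (Nat.lt_succ_self N)
  rw [h0, add_zero]
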